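/- For the depthwise (per-channel) linear convolution, let y_p = Σ_{δ ∈ N} w_δ x_{p+δ} for a fixed finite offset set N, with loss L = −Σ_p ⟨y_p, v_p⟩ (summed entrywise inner products over positions). Then ∂L/∂w_δ = −Σ_p x_{p+δ} ⊙ v_p, and a gradient step w_δ' = w_δ + η Σ_p x_{p+δ} ⊙ v_p makes the updated convolution output at position p equal y_p + η Σ_{δ∈N} Σ_{p'} (x_{p+δ} ⊙ x_{p'+δ}) ⊙ v_{p'}, a sliding-window linear-attention form. -/

import Mathlib

/- STATEMENT 15: Depthwise convolution y_p = Σ_{δ∈N} w_δ ⊙ x_{p+δ} with loss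
   L = −Σ_p ⟨y_p, v_p⟩: the gradient is ∂L/∂w_δ = −Σ_p x_{p+δ} ⊙ v_p, and the
   updated convolution output is a sliding-window linear-attention form. -/

open Finset

theorem depthwise_conv_ttt_is_sliding_window_linear_attention
    (C : ℕ)
    (P N : Finset ℤ)                    -- positions and kernel offsets
    (x v : ℤ → (Fin C → ℝ))             -- inputs and targets, channel vectors
    (w : ℤ → (Fin C → ℝ))               -- depthwise kernel weights per offset
    (η : ℝ)
    (y : (ℤ → (Fin C → ℝ)) → ℤ → (Fin C → ℝ))
    (hy : y = fun w' p => ∑ δ ∈ N, w' δ * x (p + δ))     -- depthwise convolution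
    (L : (ℤ → (Fin C → ℝ)) → ℝ)
    (hL : L = fun w' => -(∑ p ∈ P, ∑ c, y w' p c * v p c))
    (w' : ℤ → (Fin C → ℝ))
    (hw' : w' = fun δ => w δ + η • ∑ p ∈ P, x (p + δ) * v p) :
    (∀ δ₀ ∈ N, ∀ u,
        fderiv ℝ (fun u' => L (Function.update w δ₀ u')) (w δ₀) u
          = ∑ c, (-(∑ p ∈ P, x (p + δ₀) c * v p c)) * u c) ∧
    (∀ p, y w' p = y w p + η • ∑ δ ∈ N, ∑ p' ∈ P, (x (p + δ) * x (p' + δ)) * v p') := by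
  constructor
  · intro δ₀ hδ₀ u
    set B : Fin C → ℝ := fun c => -(∑ p ∈ P, x (p + δ₀) c * v p c) with hB
    have h1 : ∀ (u' : Fin C → ℝ) p c, (∑ δ ∈ N, Function.update w δ₀ u' δ * x (p + δ)) c
        = u' c * x (p + δ₀) c + ∑ δ ∈ N.erase δ₀, w δ c * x (p + δ) c := by
      intro u' p c
      rw [← Finset.add_sum_erase N _ hδ₀]
      simp only [Finset.sum_apply, Pi.add_apply, Pi.mul_apply, Function.update_self]
      congr 1
      exact Finset.sum_congr rfl fun δ hδ => by
        rw [Function.update_of_ne (Finset.ne_of_mem_erase hδ)]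
    have key : ∀ u' : Fin C → ℝ,
        (∑ p ∈ P, ∑ c, (∑ δ ∈ N, Function.update w δ₀ u' δ * x (p + δ)) c * v p c)
        = (∑ c, (∑ p ∈ P, x (p + δ₀) c * v p c) * u' c)
          + (∑ p ∈ P, ∑ c, (∑ δ ∈ N.erase δ₀, w δ c * x (p + δ) c) * v p c) := by
      intro u'
      simp only [h1, add_mul, Finset.sum_add_distrib]
      congr 1
      rw [Finset.sum_comm]
      refine Finset.sum_congr rfl fun c _ => ?_
      rw [Finset.sum_mul]
      refine Finset.sum_congr rfl fun p _ => ?_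
      ring
    have hfun : (fun u' => L (Function.update w δ₀ u'))
        = fun u' : Fin C → ℝ =>
          (∑ c, B c * u' c)
          + (-(∑ p ∈ P, ∑ c, (∑ δ ∈ N.erase δ₀, w δ c * x (p + δ) c) * v p c)) := by
      funext u'
      subst hy hL
      simp only
      rw [key u', neg_add]
      congr 1
      simp [hB, neg_mul]
    rw [hfun]
    have hderiv : HasFDerivAt (fun u' : Fin C → ℝ => ∑ c, B c * u' c)
        (∑ c, B c • (ContinuousLinearMap.proj c : (Fin C → ℝ) →L[ℝ] ℝ)) (w δ₀) := by
      apply HasFDerivAt.fun_sum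
      intro c _
      exact ((ContinuousLinearMap.proj c : (Fin C → ℝ) →L[ℝ] ℝ).hasFDerivAt).const_mul (B c)
    rw [(hderiv.add_const _).fderiv]
    simp [hB, ContinuousLinearMap.sum_apply, neg_mul]
  · intro p
    subst hy hw'
    funext c
    simp only [Finset.sum_apply, Pi.add_apply, Pi.mul_apply, Pi.smul_apply,
      smul_eq_mul, add_mul, Finset.sum_add_distrib, Finset.mul_sum]
    congr 1
    refine Finset.sum_congr rfl fun δ _ => ?_
    rw [Finset.sum_mul]
    exact Finset.sum_congr rfl fun p' _ => by ring
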